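/- Assume the exit-space setup with closure ran D_{K0*} = N, and let X = [[X₁₁, X₁₂], [X₁₂*, X₂₂]] be a selfadjoint contraction on N ⊕ 𝓗. Then for every u ∈ H ⊕ 𝓗 the following two identities of infima hold: inf over f₀ ∈ H₀ and h ∈ 𝓗 of ⟨(I + B̃_X)(u + (f₀,0,0) + (0,0,h)), u + (f₀,0,0) + (0,0,h)⟩ equals inf over h ∈ 𝓗 of ⟨(I + X)(D_{K0*} P_N u, h), (D_{K0*} P_N u, h)⟩; and the same identity holds with I + B̃_X and I + X replaced by I − B̃_X and I − X respectively. (These identities express that the Kreĭn shorted operator (I + B̃_X)_N equals B̂₀ − B_μ and (I − B̃_X)_N equals B_M − B̂₁.) -/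

import Mathlib

open ContinuousLinearMap Complex Filter
open scoped InnerProductSpace Topology

set_option synthInstance.maxHeartbeats 1000000
set_option maxHeartbeats 1000000

noncomputable section

variable {E F : Type*} [NormedAddCommGroup E] [InnerProductSpace ℂ E]
  [NormedAddCommGroup F] [InnerProductSpace ℂ F]

/-- The 2×2 block operator `[[A, B], [C, D]]` on the Hilbert space orthogonal direct sum
`E ⊕ F` (realized as `WithLp 2 (E × F)`), acting by `(e, f) ↦ (A e + B f, C e + D f)`. -/
def blk (A : E →L[ℂ] E) (B : F →L[ℂ] E) (C : E →L[ℂ] F) (D : F →L[ℂ] F) :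
    WithLp 2 (E × F) →L[ℂ] WithLp 2 (E × F) :=
  ((WithLp.prodContinuousLinearEquiv 2 ℂ E F).symm : E × F →L[ℂ] WithLp 2 (E × F)) ∘L
    ((A.coprod B).prod (C.coprod D)) ∘L
    ((WithLp.prodContinuousLinearEquiv 2 ℂ E F) : WithLp 2 (E × F) →L[ℂ] E × F)

/-- The isometric embedding of the first summand `E` into `E ⊕ F`. -/
def inl2 : E →L[ℂ] WithLp 2 (E × F) :=
  ((WithLp.prodContinuousLinearEquiv 2 ℂ E F).symm : E × F →L[ℂ] WithLp 2 (E × F)) ∘L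
    .inl ℂ E F

/-- The isometric embedding of the second summand `F` into `E ⊕ F`. -/
def inr2 : F →L[ℂ] WithLp 2 (E × F) :=
  ((WithLp.prodContinuousLinearEquiv 2 ℂ E F).symm : E × F →L[ℂ] WithLp 2 (E × F)) ∘L
    .inr ℂ E F

/-- The orthogonal projection of `E ⊕ F` onto the first summand `E`. -/
def fst2 : WithLp 2 (E × F) →L[ℂ] E :=
  .fst ℂ E F ∘L ((WithLp.prodContinuousLinearEquiv 2 ℂ E F) : WithLp 2 (E × F) →L[ℂ] E × F)

/-- The orthogonal projection of `E ⊕ F` onto the second summand `F`. -/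
def snd2 : WithLp 2 (E × F) →L[ℂ] F :=
  .snd ℂ E F ∘L ((WithLp.prodContinuousLinearEquiv 2 ℂ E F) : WithLp 2 (E × F) →L[ℂ] E × F)

/-- The element `(e, f)` of the orthogonal direct sum `E ⊕ F`. -/
def mk2 (e : E) (f : F) : WithLp 2 (E × F) :=
  (WithLp.prodContinuousLinearEquiv 2 ℂ E F).symm (e, f)

section AuxLemmas

variable {E F : Type*} [NormedAddCommGroup E] [InnerProductSpace ℂ E]
  [NormedAddCommGroup F] [InnerProductSpace ℂ F]

lemma blk_apply' (A : E →L[ℂ] E) (B : F →L[ℂ] E) (C : E →L[ℂ] F) (D : F →L[ℂ] F)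
    (x : WithLp 2 (E × F)) :
    blk A B C D x = mk2 (A (fst2 x) + B (snd2 x)) (C (fst2 x) + D (snd2 x)) := rfl

lemma fst2_mk2 (e : E) (f : F) : fst2 (mk2 e f) = e := rfl
lemma snd2_mk2 (e : E) (f : F) : snd2 (mk2 e f) = f := rfl
lemma mk2_add (e e' : E) (f f' : F) : mk2 e f + mk2 e' f' = mk2 (e + e') (f + f') := rfl
lemma inl2_eq_mk2 (e : E) : (inl2 e : WithLp 2 (E × F)) = mk2 e 0 := rfl
lemma inr2_eq_mk2 (f : F) : (inr2 f : WithLp 2 (E × F)) = mk2 0 f := rfl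
lemma mk2_fst2_snd2 (x : WithLp 2 (E × F)) : mk2 (fst2 x) (snd2 x) = x := rfl
lemma fst2_inl2 (e : E) : fst2 (inl2 e : WithLp 2 (E × F)) = e := rfl
lemma snd2_inl2 (e : E) : snd2 (inl2 e : WithLp 2 (E × F)) = 0 := rfl
lemma fst2_inr2 (f : F) : fst2 (inr2 f : WithLp 2 (E × F)) = 0 := rfl
lemma snd2_inr2 (f : F) : snd2 (inr2 f : WithLp 2 (E × F)) = f := rfl

lemma ext2 {x : WithLp 2 (E × F)} {e : E} {f : F} (h1 : fst2 x = e) (h2 : snd2 x = f) :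
    x = mk2 e f := by
  rw [← h1, ← h2]
  exact (mk2_fst2_snd2 x).symm

lemma inner_mk2 (a c : E) (b d : F) :
    ⟪mk2 a b, mk2 c d⟫_ℂ = ⟪a, c⟫_ℂ + ⟪b, d⟫_ℂ := WithLp.prod_inner_apply _ _

lemma eqmk2 {a a' : E} {b b' : F} (h1 : a = a') (h2 : b = b') : mk2 a b = mk2 a' b' := by
  rw [h1, h2]

lemma blk_neg (A : E →L[ℂ] E) (B : F →L[ℂ] E) (C : E →L[ℂ] F) (D : F →L[ℂ] F) :
    blk (-A) (-B) (-C) (-D) = -blk A B C D := by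
  apply ContinuousLinearMap.ext
  intro x
  show mk2 ((-A) (fst2 x) + (-B) (snd2 x)) ((-C) (fst2 x) + (-D) (snd2 x))
      = mk2 (-(A (fst2 x) + B (snd2 x))) (-(C (fst2 x) + D (snd2 x)))
  exact eqmk2 (by rw [neg_add]; rfl) (by rw [neg_add]; rfl)

lemma re_inner_self_nonneg (w : E) : 0 ≤ (⟪w, w⟫_ℂ).re := by
  rw [← RCLike.re_to_complex]; exact inner_self_nonneg

lemma re_inner_self_eq_norm_sq (w : E) : (⟪w, w⟫_ℂ).re = ‖w‖ ^ 2 := by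
  rw [← RCLike.re_to_complex]; exact inner_self_eq_norm_sq w

lemma quad_nonneg' (X : E →L[ℂ] E) (hX : ‖X‖ ≤ 1) (w : E) : 0 ≤ (⟪(1 + X) w, w⟫_ℂ).re := by
  have h1 : ((1 : E →L[ℂ] E) + X) w = w + X w := rfl
  rw [h1, inner_add_left, Complex.add_re]
  have h2 := re_inner_self_eq_norm_sq w
  have h3 : |(⟪X w, w⟫_ℂ).re| ≤ ‖X w‖ * ‖w‖ := by
    calc |(⟪X w, w⟫_ℂ).re| ≤ ‖⟪X w, w⟫_ℂ‖ := Complex.abs_re_le_norm _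
      _ = ‖⟪X w, w⟫_ℂ‖ := rfl
      _ ≤ ‖X w‖ * ‖w‖ := norm_inner_le_norm _ _
  have h4 : ‖X w‖ ≤ ‖w‖ := by
    calc ‖X w‖ ≤ ‖X‖ * ‖w‖ := ContinuousLinearMap.le_opNorm _ _
      _ ≤ 1 * ‖w‖ := mul_le_mul_of_nonneg_right hX (norm_nonneg _)
      _ = ‖w‖ := one_mul _
  nlinarith [abs_le.mp h3, norm_nonneg w]

variable [CompleteSpace E] [CompleteSpace F]

lemma sa_inner {A : E →L[ℂ] E} (hA : IsSelfAdjoint A) (x y : E) :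
    ⟪A x, y⟫_ℂ = ⟪x, A y⟫_ℂ := by
  conv_lhs => rw [← hA.adjoint_eq]
  rw [ContinuousLinearMap.adjoint_inner_left]


lemma spec_bound (B₀ : E →L[ℂ] E) (hc : ‖B₀‖ ≤ 1) :
    ∀ x ∈ spectrum ℝ B₀, -1 ≤ x ∧ x ≤ 1 := by
  intro x hx
  rcases subsingleton_or_nontrivial E with h | h
  · exact absurd hx (by simp [spectrum.mem_iff, isUnit_of_subsingleton])
  · have := spectrum.norm_le_norm_of_mem hx
    rw [Real.norm_eq_abs] at this
    constructor
    · linarith [neg_abs_le x]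
    · linarith [le_abs_self x]

lemma cfc_sqrt_package (B₀ : E →L[ℂ] E) (hsa : IsSelfAdjoint B₀) (hc : ‖B₀‖ ≤ 1) :
    ∃ S T : E →L[ℂ] E, IsSelfAdjoint S ∧ IsSelfAdjoint T ∧
      S * S = 1 + B₀ ∧ T * T = 1 - B₀ ∧
      T * S = CFC.sqrt (1 - B₀ ^ 2) ∧ S * T = CFC.sqrt (1 - B₀ ^ 2) := by
  set S := cfc (fun x : ℝ => Real.sqrt (1+x)) B₀ with hS
  set T := cfc (fun x : ℝ => Real.sqrt (1-x)) B₀ with hT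
  have hSsa : IsSelfAdjoint S := cfc_predicate _ _
  have hTsa : IsSelfAdjoint T := cfc_predicate _ _
  have hS2 : S * S = 1 + B₀ := by
    rw [hS, ← cfc_mul _ _ B₀,
      cfc_congr (g := fun x : ℝ => 1 + x) (fun x hx => Real.mul_self_sqrt
        (by linarith [(spec_bound B₀ hc x hx).1])),
      cfc_add .., cfc_const_one ℝ B₀, cfc_id' ℝ B₀]
  have hT2 : T * T = 1 - B₀ := by
    rw [hT, ← cfc_mul _ _ B₀,
      cfc_congr (g := fun x : ℝ => 1 - x) (fun x hx => Real.mul_self_sqrt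
        (by linarith [(spec_bound B₀ hc x hx).2])),
      cfc_sub .., cfc_const_one ℝ B₀, cfc_id' ℝ B₀]
  have hTS : T * S = cfc (fun x : ℝ => Real.sqrt (1-x) * Real.sqrt (1+x)) B₀ :=
    (cfc_mul _ _ B₀).symm
  have hST : S * T = cfc (fun x : ℝ => Real.sqrt (1-x) * Real.sqrt (1+x)) B₀ := by
    rw [hS, hT, ← cfc_mul _ _ B₀]
    exact cfc_congr fun x _ => mul_comm _ _
  have hnn : (0 : E →L[ℂ] E) ≤ cfc (fun x : ℝ => Real.sqrt (1-x) * Real.sqrt (1+x)) B₀ :=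
    cfc_nonneg fun x _ => mul_nonneg (Real.sqrt_nonneg _) (Real.sqrt_nonneg _)
  have hsq : cfc (fun x : ℝ => Real.sqrt (1-x) * Real.sqrt (1+x)) B₀ *
      cfc (fun x : ℝ => Real.sqrt (1-x) * Real.sqrt (1+x)) B₀ = 1 - B₀ ^ 2 := by
    rw [← cfc_mul _ _ B₀,
      cfc_congr (g := fun x : ℝ => 1 - x ^ 2) (fun x hx => ?_),
      cfc_sub .., cfc_const_one ℝ B₀, cfc_pow .., cfc_id' ℝ B₀]
    obtain ⟨h1, h2⟩ := spec_bound B₀ hc x hx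
    have e1 : Real.sqrt (1-x) * Real.sqrt (1+x) * (Real.sqrt (1-x) * Real.sqrt (1+x))
        = (Real.sqrt (1-x) * Real.sqrt (1-x)) * (Real.sqrt (1+x) * Real.sqrt (1+x)) := by ring
    rw [e1, Real.mul_self_sqrt (by linarith), Real.mul_self_sqrt (by linarith)]
    ring
  have hsqrt : CFC.sqrt (1 - B₀ ^ 2) =
      cfc (fun x : ℝ => Real.sqrt (1-x) * Real.sqrt (1+x)) B₀ :=
    CFC.sqrt_unique hsq hnn
  exact ⟨S, T, hSsa, hTsa, hS2, hT2, by rw [hTS, hsqrt], by rw [hST, hsqrt]⟩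

lemma contr_pos (K₀ : E →L[ℂ] F) (hc : ‖K₀‖ ≤ 1) :
    (0 : F →L[ℂ] F) ≤ 1 - K₀ ∘L adjoint K₀ := by
  rw [ContinuousLinearMap.nonneg_iff_isPositive]
  constructor
  · have : IsSelfAdjoint (K₀ ∘L adjoint K₀) := by
      rw [isSelfAdjoint_iff', adjoint_comp, adjoint_adjoint]
    exact ContinuousLinearMap.isSelfAdjoint_iff_isSymmetric.mp (IsSelfAdjoint.sub (IsSelfAdjoint.one _) this)
  · intro x
    have h1 : (1 - K₀ ∘L adjoint K₀) x = x - K₀ (adjoint K₀ x) := rfl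
    rw [ContinuousLinearMap.reApplyInnerSelf_apply, h1, inner_sub_left]
    have h2 : ⟪K₀ (adjoint K₀ x), x⟫_ℂ = ⟪adjoint K₀ x, adjoint K₀ x⟫_ℂ := by
      rw [← ContinuousLinearMap.adjoint_inner_right]
    rw [map_sub, h2, inner_self_eq_norm_sq, inner_self_eq_norm_sq]
    have h3 : ‖adjoint K₀ x‖ ≤ ‖x‖ := by
      calc ‖adjoint K₀ x‖ ≤ ‖adjoint K₀‖ * ‖x‖ := ContinuousLinearMap.le_opNorm _ _
        _ ≤ 1 * ‖x‖ := by
            have h4 : ‖adjoint K₀‖ = ‖K₀‖ := adjoint.norm_map K₀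
            rw [h4]; exact mul_le_mul_of_nonneg_right hc (norm_nonneg _)
        _ = ‖x‖ := one_mul _
    nlinarith [norm_nonneg (adjoint K₀ x), norm_nonneg x]

lemma exists_approx (S : E →L[ℂ] E) (hS : IsSelfAdjoint S) (c : E)
    (hc : ∀ x, S x = 0 → ⟪c, x⟫_ℂ = 0) : ∀ ε > 0, ∃ f, ‖S f + c‖ < ε := by
  intro ε hε
  have hmem : c ∈ (LinearMap.range (S : E →ₗ[ℂ] E) : Submodule ℂ E)ᗮᗮ := by
    rw [Submodule.mem_orthogonal]
    intro y hy
    have hSy : S y = 0 := by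
      have h1 := (Submodule.mem_orthogonal _ _).mp hy (S (S y)) ⟨S y, rfl⟩
      rw [sa_inner hS] at h1
      exact inner_self_eq_zero.mp h1
    rw [← inner_conj_symm, hc y hSy, map_zero]
  rw [Submodule.orthogonal_orthogonal_eq_closure] at hmem
  have hcl : -c ∈ closure ((LinearMap.range (S : E →ₗ[ℂ] E) : Submodule ℂ E) : Set E) := neg_mem hmem
  obtain ⟨y, hy, hdy⟩ := Metric.mem_closure_iff.mp hcl ε hε
  obtain ⟨f, rfl⟩ := hy
  refine ⟨f, ?_⟩
  have h5 : ‖S f + c‖ = dist (-c) (S f) := by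
    rw [dist_eq_norm, ← norm_neg]
    congr 1
    abel
  rw [h5]
  exact hdy

lemma iInf_add_split {α β : Type*} [Nonempty α] [Nonempty β] (a : α → ℝ) (b : β → ℝ)
    (ha0 : ∀ f, 0 ≤ a f) (hb0 : ∀ h, 0 ≤ b h) (hainf : ∀ ε > 0, ∃ f, a f < ε) :
    ⨅ p : α × β, (a p.1 + b p.2) = ⨅ h, b h := by
  have hbdd : BddBelow (Set.range b) := ⟨0, by rintro _ ⟨h, rfl⟩; exact hb0 h⟩
  have hbdd2 : BddBelow (Set.range fun p : α × β => a p.1 + b p.2) :=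
    ⟨0, by rintro _ ⟨p, rfl⟩; exact add_nonneg (ha0 p.1) (hb0 p.2)⟩
  apply le_antisymm
  · refine le_ciInf fun h => ?_
    refine le_of_forall_pos_le_add fun ε hε => ?_
    obtain ⟨f, hf⟩ := hainf ε hε
    calc ⨅ p : α × β, (a p.1 + b p.2) ≤ a f + b h := ciInf_le hbdd2 (f, h)
      _ ≤ b h + ε := by linarith
  · refine le_ciInf fun p => ?_
    calc ⨅ h, b h ≤ b p.2 := ciInf_le hbdd p.2
      _ ≤ a p.1 + b p.2 := by linarith [ha0 p.1]

lemma ciInf_comp_surj {α β : Type*} [Nonempty α] {f : α → β} (hf : Function.Surjective f)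
    (g : β → ℝ) : ⨅ a, g (f a) = ⨅ b, g b := by
  have h : Set.range (fun a => g (f a)) = Set.range g := by
    have h0 : (fun a => g (f a)) = g ∘ f := rfl
    rw [h0, Set.range_comp, hf.range_eq, Set.image_univ]
  rw [iInf, iInf, h]

lemma ciInf_shift {α β : Type*} [AddCommGroup α] [AddCommGroup β] (g : α × β → ℝ) (a0 : α) (b0 : β) :
    (⨅ p : α × β, g (a0 + p.1, b0 + p.2)) = ⨅ p, g p := by
  refine ciInf_comp_surj (f := fun p : α × β => (a0 + p.1, b0 + p.2)) ?_ g
  intro q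
  refine ⟨(q.1 - a0, q.2 - b0), ?_⟩
  refine Prod.ext ?_ ?_ <;> dsimp only <;> abel

end AuxLemmas

section MainLemma

variable {H₀ N 𝓗 : Type*}
    [NormedAddCommGroup H₀] [InnerProductSpace ℂ H₀] [CompleteSpace H₀]
    [NormedAddCommGroup N] [InnerProductSpace ℂ N] [CompleteSpace N]
    [NormedAddCommGroup 𝓗] [InnerProductSpace ℂ 𝓗] [CompleteSpace 𝓗]

/-- The full exit-space block operator. -/
def BXdef (B₀ : H₀ →L[ℂ] H₀) (K₀ : H₀ →L[ℂ] N) (X11 : N →L[ℂ] N) (X12 : 𝓗 →L[ℂ] N)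
    (X22 : 𝓗 →L[ℂ] 𝓗) :
    WithLp 2 (WithLp 2 (H₀ × N) × 𝓗) →L[ℂ] WithLp 2 (WithLp 2 (H₀ × N) × 𝓗) :=
  blk (blk B₀ (CFC.sqrt (1 - B₀ ^ 2) ∘L adjoint K₀) (K₀ ∘L CFC.sqrt (1 - B₀ ^ 2))
      (-(K₀ ∘L B₀ ∘L adjoint K₀) +
        CFC.sqrt (1 - K₀ ∘L adjoint K₀) ∘L X11 ∘L CFC.sqrt (1 - K₀ ∘L adjoint K₀)))
    (inr2 ∘L CFC.sqrt (1 - K₀ ∘L adjoint K₀) ∘L X12)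
    (adjoint X12 ∘L CFC.sqrt (1 - K₀ ∘L adjoint K₀) ∘L snd2) X22

theorem main_plus
    (B₀ : H₀ →L[ℂ] H₀) (hB₀sa : IsSelfAdjoint B₀) (hB₀c : ‖B₀‖ ≤ 1)
    (K₀ : H₀ →L[ℂ] N) (hK₀c : ‖K₀‖ ≤ 1)
    (hker : LinearMap.ker (((CFC.sqrt (1 - B₀ ^ 2) : H₀ →L[ℂ] H₀)) : H₀ →ₗ[ℂ] H₀) ≤
      LinearMap.ker (K₀ : H₀ →ₗ[ℂ] N))
    (X11 : N →L[ℂ] N) (X12 : 𝓗 →L[ℂ] N) (X22 : 𝓗 →L[ℂ] 𝓗)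
    (hXc : ‖blk X11 X12 (adjoint X12) X22‖ ≤ 1)
    (u : WithLp 2 (WithLp 2 (H₀ × N) × 𝓗)) :
    (⨅ p : H₀ × 𝓗,
      (⟪(1 + BXdef B₀ K₀ X11 X12 X22) (u + inl2 (inl2 p.1) + inr2 p.2),
          u + inl2 (inl2 p.1) + inr2 p.2⟫_ℂ).re) =
    ⨅ h : 𝓗,
      (⟪(1 + blk X11 X12 (adjoint X12) X22)
          (mk2 (CFC.sqrt (1 - K₀ ∘L adjoint K₀) (snd2 (fst2 u))) h),
          mk2 (CFC.sqrt (1 - K₀ ∘L adjoint K₀) (snd2 (fst2 u))) h⟫_ℂ).re := by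
  obtain ⟨S, T, hSsa, hTsa, hS2, hT2, hTS, hST⟩ := cfc_sqrt_package B₀ hB₀sa hB₀c
  set DB := CFC.sqrt (1 - B₀ ^ 2) with hDBdef
  set DK := CFC.sqrt (1 - K₀ ∘L adjoint K₀) with hDKdef
  set n : N := snd2 (fst2 u) with hn
  have hDKsa : IsSelfAdjoint DK := IsSelfAdjoint.of_nonneg (CFC.sqrt_nonneg _)
  have hDK2 : DK * DK = 1 - K₀ ∘L adjoint K₀ := CFC.sqrt_mul_sqrt_self _ (contr_pos K₀ hK₀c)
  have hDBsa : IsSelfAdjoint DB := IsSelfAdjoint.of_nonneg (CFC.sqrt_nonneg _)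
  have hcomm : S * T = T * S := hST.trans hTS.symm
  have hDB2 : DB * DB = 1 - B₀ ^ 2 := by
    rw [← hTS]
    calc (T*S)*(T*S) = T*(S*(T*S)) := by rw [mul_assoc]
      _ = T*((S*T)*S) := by rw [← mul_assoc S T S]
      _ = T*((T*S)*S) := by rw [hcomm]
      _ = T*(T*(S*S)) := by rw [mul_assoc]
      _ = (T*T)*(S*S) := by rw [← mul_assoc]
      _ = (1-B₀)*(1+B₀) := by rw [hT2, hS2]
      _ = 1 - B₀ ^ 2 := by noncomm_ring
  -- Step A: reparametrize the infimum
  have hsurj : Function.Surjective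
      (fun p : H₀ × 𝓗 => (fst2 (fst2 u) + p.1, snd2 u + p.2)) := by
    intro q
    exact ⟨(q.1 - fst2 (fst2 u), q.2 - snd2 u), by simp⟩
  have hrep : ∀ p : H₀ × 𝓗, u + inl2 (inl2 p.1) + inr2 p.2
      = mk2 (mk2 (fst2 (fst2 u) + p.1) n) (snd2 u + p.2) := by
    intro p
    have c1 : fst2 (u + inl2 (inl2 p.1) + inr2 p.2) = fst2 u + inl2 p.1 := by
      rw [map_add, map_add, fst2_inl2, fst2_inr2, add_zero]
    have c2 : snd2 (u + inl2 (inl2 p.1) + inr2 p.2) = snd2 u + p.2 := by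
      rw [map_add, map_add, snd2_inl2, snd2_inr2, add_zero]
    have c11 : fst2 (fst2 u + (inl2 p.1 : WithLp 2 (H₀ × N))) = fst2 (fst2 u) + p.1 := by
      rw [map_add, fst2_inl2]
    have c12 : snd2 (fst2 u + (inl2 p.1 : WithLp 2 (H₀ × N))) = n := by
      rw [map_add, snd2_inl2, add_zero, hn]
    exact ext2 (c1.trans (ext2 c11 c12)) c2
  have h0 : (⨅ p : H₀ × 𝓗,
        (⟪(1 + BXdef B₀ K₀ X11 X12 X22) (u + inl2 (inl2 p.1) + inr2 p.2),
            u + inl2 (inl2 p.1) + inr2 p.2⟫_ℂ).re) =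
      ⨅ q : H₀ × 𝓗,
        (⟪(1 + BXdef B₀ K₀ X11 X12 X22) (mk2 (mk2 q.1 n) q.2),
            mk2 (mk2 q.1 n) q.2⟫_ℂ).re := by
    have h1 := ciInf_shift (fun q : H₀ × 𝓗 =>
      (⟪(1 + BXdef B₀ K₀ X11 X12 X22) (mk2 (mk2 q.1 n) q.2),
          mk2 (mk2 q.1 n) q.2⟫_ℂ).re) (fst2 (fst2 u)) (snd2 u)
    rw [← h1]
    congr 1
    funext p
    rw [hrep p]
  rw [h0]
  -- Step B: pointwise identity
  have key : ∀ (f : H₀) (h : 𝓗),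
      ⟪(1 + BXdef B₀ K₀ X11 X12 X22) (mk2 (mk2 f n) h), mk2 (mk2 f n) h⟫_ℂ
      = ⟪S f + T (adjoint K₀ n), S f + T (adjoint K₀ n)⟫_ℂ
        + ⟪(1 + blk X11 X12 (adjoint X12) X22) (mk2 (DK n) h), mk2 (DK n) h⟫_ℂ := by
    intro f h
    have a1 : ⟪S f, S f⟫_ℂ = ⟪f, f⟫_ℂ + ⟪B₀ f, f⟫_ℂ := by
      have e : ⟪S f, S f⟫_ℂ = ⟪(S * S) f, f⟫_ℂ := by
        rw [ContinuousLinearMap.mul_apply]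
        exact (sa_inner hSsa (S f) f).symm
      rw [e, hS2, show ((1 : H₀ →L[ℂ] H₀) + B₀) f = f + B₀ f from rfl, inner_add_left]
    have a2 : ⟪S f, T (adjoint K₀ n)⟫_ℂ = ⟪DB f, adjoint K₀ n⟫_ℂ := by
      rw [← sa_inner hTsa, ← ContinuousLinearMap.mul_apply, hTS]
    have a3 : ⟪T (adjoint K₀ n), S f⟫_ℂ = ⟪DB (adjoint K₀ n), f⟫_ℂ := by
      rw [← sa_inner hSsa (T (adjoint K₀ n)) f, ← ContinuousLinearMap.mul_apply, hST]
    have a4 : ⟪T (adjoint K₀ n), T (adjoint K₀ n)⟫_ℂ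
        = ⟪adjoint K₀ n, adjoint K₀ n⟫_ℂ - ⟪B₀ (adjoint K₀ n), adjoint K₀ n⟫_ℂ := by
      have e : ⟪T (adjoint K₀ n), T (adjoint K₀ n)⟫_ℂ = ⟪(T * T) (adjoint K₀ n), adjoint K₀ n⟫_ℂ := by
        rw [ContinuousLinearMap.mul_apply]
        exact (sa_inner hTsa (T (adjoint K₀ n)) (adjoint K₀ n)).symm
      rw [e, hT2, show ((1 : H₀ →L[ℂ] H₀) - B₀) (adjoint K₀ n)
        = adjoint K₀ n - B₀ (adjoint K₀ n) from rfl, inner_sub_left]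
    have a5 : ⟪K₀ (B₀ (adjoint K₀ n)), n⟫_ℂ = ⟪B₀ (adjoint K₀ n), adjoint K₀ n⟫_ℂ :=
      (ContinuousLinearMap.adjoint_inner_right _ _ _).symm
    have a2' : ⟪K₀ (DB f), n⟫_ℂ = ⟪DB f, adjoint K₀ n⟫_ℂ :=
      (ContinuousLinearMap.adjoint_inner_right _ _ _).symm
    have a6 : ⟪DK n, DK n⟫_ℂ = ⟪n, n⟫_ℂ - ⟪adjoint K₀ n, adjoint K₀ n⟫_ℂ := by
      have e : ⟪DK n, DK n⟫_ℂ = ⟪(DK * DK) n, n⟫_ℂ := by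
        rw [ContinuousLinearMap.mul_apply]
        exact (sa_inner hDKsa (DK n) n).symm
      rw [e, hDK2, show ((1 : N →L[ℂ] N) - K₀ ∘L adjoint K₀) n
        = n - K₀ (adjoint K₀ n) from rfl, inner_sub_left,
        show ⟪K₀ (adjoint K₀ n), n⟫_ℂ = ⟪adjoint K₀ n, adjoint K₀ n⟫_ℂ from
          (ContinuousLinearMap.adjoint_inner_right _ _ _).symm]
    have a7 : ⟪X11 (DK n), DK n⟫_ℂ = ⟪DK (X11 (DK n)), n⟫_ℂ := (sa_inner hDKsa _ _).symm
    have a8 : ⟪X12 h, DK n⟫_ℂ = ⟪DK (X12 h), n⟫_ℂ := (sa_inner hDKsa _ _).symm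
    simp only [BXdef, ContinuousLinearMap.add_apply, ContinuousLinearMap.one_apply,
      blk_apply', fst2_mk2, snd2_mk2, mk2_add, ContinuousLinearMap.comp_apply,
      ContinuousLinearMap.neg_apply, inr2_eq_mk2, inner_mk2, inner_add_left, inner_add_right,
      inner_neg_left, zero_add, add_zero, inner_zero_left, inner_zero_right]
    rw [a1, a2, a3, a4, a6, a7, a8, a2', a5]
    ring
  simp only [key, Complex.add_re]
  -- Step C: kernel fact and splitting
  have hker' : ∀ x, S x = 0 → ⟪T (adjoint K₀ n), x⟫_ℂ = 0 := by
    intro x hx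
    have h1 : (S * S) x = 0 := by rw [ContinuousLinearMap.mul_apply, hx, map_zero]
    rw [hS2] at h1
    have hDBx : DB x = 0 := by
      have h2 : DB (DB x) = 0 := by
        have h3 : (DB * DB) x = 0 := by
          rw [hDB2]
          have h4 : (1 - B₀ ^ 2 : H₀ →L[ℂ] H₀) = (1 - B₀) * (1 + B₀) := by noncomm_ring
          rw [h4, ContinuousLinearMap.mul_apply, h1, map_zero]
        rwa [ContinuousLinearMap.mul_apply] at h3
      have h5 : ⟪DB x, DB x⟫_ℂ = 0 := by
        rw [sa_inner hDBsa, h2, inner_zero_right]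
      exact inner_self_eq_zero.mp h5
    have hTx : DB (T x) = 0 := by
      have h6 : DB * T = T * DB := by
        rw [← hTS, mul_assoc, hST, ← hTS, ← mul_assoc]
      calc DB (T x) = (DB * T) x := rfl
        _ = (T * DB) x := by rw [h6]
        _ = T (DB x) := rfl
        _ = 0 := by rw [hDBx, map_zero]
    have hKTx : K₀ (T x) = 0 := hker (LinearMap.mem_ker.mpr hTx)
    rw [sa_inner hTsa, ContinuousLinearMap.adjoint_inner_left, hKTx, inner_zero_right]
  refine iInf_add_split
    (fun f : H₀ => (⟪S f + T (adjoint K₀ n), S f + T (adjoint K₀ n)⟫_ℂ).re)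
    (fun h : 𝓗 => (⟪(1 + blk X11 X12 (adjoint X12) X22) (mk2 (DK n) h),
        mk2 (DK n) h⟫_ℂ).re)
    (fun f => re_inner_self_nonneg _)
    (fun h => quad_nonneg' _ hXc _) ?_
  intro ε hε
  obtain ⟨f, hf⟩ := exists_approx S hSsa (T (adjoint K₀ n)) hker'
    (Real.sqrt ε) (Real.sqrt_pos.mpr hε)
  refine ⟨f, ?_⟩
  show (⟪S f + T (adjoint K₀ n), S f + T (adjoint K₀ n)⟫_ℂ).re < ε
  rw [re_inner_self_eq_norm_sq]
  calc ‖S f + T (adjoint K₀ n)‖ ^ 2 < Real.sqrt ε ^ 2 := by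
        have := norm_nonneg (S f + T (adjoint K₀ n))
        nlinarith
    _ = ε := Real.sq_sqrt hε.le

end MainLemma

/-- Exit-space formula for shorted operators: for a selfadjoint contractive extension
`B̃_X` of the Hermitian contraction `B = B₀ + K₀ D_{B₀}` (with `closure ran D_{K₀*} = N`),
the quadratic forms of the Kreĭn shorted operators `(I ± B̃_X)_N` coincide with those of
`(I ± X)` shortened via `D_{K₀*} P_N`; this expresses `(I + B̃_X)_N = B̂₀ − B_μ` and
`(I − B̃_X)_N = B_M − B̂₁`. -/
theorem stmt_6 {H₀ N 𝓗 : Type*}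
    [NormedAddCommGroup H₀] [InnerProductSpace ℂ H₀] [CompleteSpace H₀]
    [TopologicalSpace.SeparableSpace H₀]
    [NormedAddCommGroup N] [InnerProductSpace ℂ N] [CompleteSpace N]
    [TopologicalSpace.SeparableSpace N]
    [NormedAddCommGroup 𝓗] [InnerProductSpace ℂ 𝓗] [CompleteSpace 𝓗]
    [TopologicalSpace.SeparableSpace 𝓗]
    (B₀ : H₀ →L[ℂ] H₀) (hB₀sa : IsSelfAdjoint B₀) (hB₀c : ‖B₀‖ ≤ 1)
    (K₀ : H₀ →L[ℂ] N) (hK₀c : ‖K₀‖ ≤ 1)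
    (hker : LinearMap.ker (((CFC.sqrt (1 - B₀ ^ 2) : H₀ →L[ℂ] H₀)) : H₀ →ₗ[ℂ] H₀) ≤
      LinearMap.ker (K₀ : H₀ →ₗ[ℂ] N))
    (hdense :
      (LinearMap.range (((CFC.sqrt (1 - K₀ ∘L adjoint K₀) : N →L[ℂ] N)) : N →ₗ[ℂ] N)).topologicalClosure = ⊤)
    (X11 : N →L[ℂ] N) (X12 : 𝓗 →L[ℂ] N) (X22 : 𝓗 →L[ℂ] 𝓗)
    (hXsa : IsSelfAdjoint (blk X11 X12 (adjoint X12) X22))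
    (hXc : ‖blk X11 X12 (adjoint X12) X22‖ ≤ 1) :
    let DB := CFC.sqrt (1 - B₀ ^ 2)
    let DK := CFC.sqrt (1 - K₀ ∘L adjoint K₀)
    let Ct : WithLp 2 (H₀ × N) →L[ℂ] WithLp 2 (H₀ × N) :=
      blk B₀ (DB ∘L adjoint K₀) (K₀ ∘L DB)
        (-(K₀ ∘L B₀ ∘L adjoint K₀) + DK ∘L X11 ∘L DK)
    let BX := blk Ct (inr2 ∘L DK ∘L X12) (adjoint X12 ∘L DK ∘L snd2) X22
    (∀ u : WithLp 2 (WithLp 2 (H₀ × N) × 𝓗),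
      (⨅ p : H₀ × 𝓗,
        (⟪(1 + BX) (u + inl2 (inl2 p.1) + inr2 p.2),
            u + inl2 (inl2 p.1) + inr2 p.2⟫_ℂ).re) =
      ⨅ h : 𝓗,
        (⟪(1 + blk X11 X12 (adjoint X12) X22) (mk2 (DK (snd2 (fst2 u))) h),
            mk2 (DK (snd2 (fst2 u))) h⟫_ℂ).re) ∧
    (∀ u : WithLp 2 (WithLp 2 (H₀ × N) × 𝓗),
      (⨅ p : H₀ × 𝓗,
        (⟪(1 - BX) (u + inl2 (inl2 p.1) + inr2 p.2),
            u + inl2 (inl2 p.1) + inr2 p.2⟫_ℂ).re) =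
      ⨅ h : 𝓗,
        (⟪(1 - blk X11 X12 (adjoint X12) X22) (mk2 (DK (snd2 (fst2 u))) h),
            mk2 (DK (snd2 (fst2 u))) h⟫_ℂ).re) := by
  intro DB DK Ct BX
  have hadjK : adjoint (-K₀) = -adjoint K₀ := map_neg _ _
  have hadjX : adjoint (-X12) = -adjoint X12 := map_neg _ _
  have hDK' : CFC.sqrt (1 - (-K₀) ∘L adjoint (-K₀)) = CFC.sqrt (1 - K₀ ∘L adjoint K₀) := by
    rw [hadjK, ContinuousLinearMap.comp_neg, ContinuousLinearMap.neg_comp, neg_neg]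
  have hDB' : CFC.sqrt (1 - (-B₀) ^ 2) = CFC.sqrt (1 - B₀ ^ 2) := by rw [neg_sq]
  have hXblkneg : blk (-X11) (-X12) (adjoint (-X12)) (-X22)
      = -blk X11 X12 (adjoint X12) X22 := by
    rw [hadjX]; exact blk_neg _ _ _ _
  have hBXneg : BXdef (-B₀) (-K₀) (-X11) (-X12) (-X22) = -BXdef B₀ K₀ X11 X12 X22 := by
    unfold BXdef
    rw [hDB', hDK', hadjK, hadjX]
    have b12 : CFC.sqrt (1 - B₀ ^ 2) ∘L (-adjoint K₀)
        = -(CFC.sqrt (1 - B₀ ^ 2) ∘L adjoint K₀) := ContinuousLinearMap.comp_neg _ _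
    have b21 : (-K₀) ∘L CFC.sqrt (1 - B₀ ^ 2)
        = -(K₀ ∘L CFC.sqrt (1 - B₀ ^ 2)) := ContinuousLinearMap.neg_comp _ _
    have b22 : -((-K₀) ∘L (-B₀) ∘L (-adjoint K₀)) +
          CFC.sqrt (1 - K₀ ∘L adjoint K₀) ∘L (-X11) ∘L CFC.sqrt (1 - K₀ ∘L adjoint K₀)
        = -(-(K₀ ∘L B₀ ∘L adjoint K₀) +
          CFC.sqrt (1 - K₀ ∘L adjoint K₀) ∘L X11 ∘L CFC.sqrt (1 - K₀ ∘L adjoint K₀)) := by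
      simp only [ContinuousLinearMap.neg_comp, ContinuousLinearMap.comp_neg, neg_neg, neg_add]
    have b2 : (inr2 : N →L[ℂ] WithLp 2 (H₀ × N)) ∘L CFC.sqrt (1 - K₀ ∘L adjoint K₀) ∘L (-X12)
        = -((inr2 : N →L[ℂ] WithLp 2 (H₀ × N)) ∘L CFC.sqrt (1 - K₀ ∘L adjoint K₀) ∘L X12) := by
      simp only [ContinuousLinearMap.comp_neg]
    have b3 : (-adjoint X12) ∘L CFC.sqrt (1 - K₀ ∘L adjoint K₀) ∘L (snd2 : WithLp 2 (H₀ × N) →L[ℂ] N)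
        = -(adjoint X12 ∘L CFC.sqrt (1 - K₀ ∘L adjoint K₀) ∘L (snd2 : WithLp 2 (H₀ × N) →L[ℂ] N)) := by
      simp only [ContinuousLinearMap.neg_comp]
    rw [b12, b21, b22, blk_neg, b2, b3, blk_neg]
  have hker2 : LinearMap.ker (((CFC.sqrt (1 - (-B₀) ^ 2) : H₀ →L[ℂ] H₀)) : H₀ →ₗ[ℂ] H₀) ≤
        LinearMap.ker ((-K₀ : H₀ →L[ℂ] N) : H₀ →ₗ[ℂ] N) := by
    rw [hDB']
    intro x hx
    have hx2 := hker hx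
    rw [LinearMap.mem_ker] at hx2 ⊢
    show (-K₀) x = 0
    rw [ContinuousLinearMap.neg_apply]
    rw [show K₀ x = 0 from hx2, neg_zero]
  constructor
  · intro u
    exact main_plus B₀ hB₀sa hB₀c K₀ hK₀c hker X11 X12 X22 hXc u
  · intro u
    have H := main_plus (-B₀) hB₀sa.neg (by rw [norm_neg]; exact hB₀c) (-K₀)
      (by rw [norm_neg]; exact hK₀c) hker2 (-X11) (-X12) (-X22)
      (by rw [hXblkneg, norm_neg]; exact hXc) u
    rw [hBXneg, hDK', hXblkneg, ← sub_eq_add_neg, ← sub_eq_add_neg] at H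
    exact H
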